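/- The asymptotic density of the set {n ∈ ℕ : s(n+1) ≥ s(n)} equals 3/4. -/

import Mathlib

open Filter

noncomputable abbrev s (n : ℕ) : ℕ := (Nat.digits 2 n).sum

lemma s_two_mul (m : ℕ) : s (2 * m) = s m := by
  rcases Nat.eq_zero_or_pos m with h | h
  · simp [h, s]
  · unfold s
    rw [Nat.digits_def' (by norm_num) (by omega)]
    simp [Nat.mul_div_cancel_left, Nat.mul_mod_right]

lemma s_two_mul_add_one (m : ℕ) : s (2 * m + 1) = s m + 1 := by
  unfold s
  rw [Nat.digits_def' (by norm_num) (by omega)]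
  have h1 : (2 * m + 1) % 2 = 1 := by omega
  have h2 : (2 * m + 1) / 2 = m := by omega
  rw [h1, h2]; simp [Nat.add_comm]

lemma s_succ_le (k : ℕ) : s (k + 1) ≤ s k + 1 := by
  induction k using Nat.strong_induction_on with
  | _ k ih =>
    rcases Nat.even_or_odd k with ⟨m, hm⟩ | ⟨m, hm⟩
    · subst hm
      rw [show m + m = 2 * m by ring, s_two_mul_add_one, s_two_mul]
    · subst hm
      rw [show 2 * m + 1 + 1 = 2 * (m + 1) by ring, s_two_mul, s_two_mul_add_one]
      have := ih m (by omega)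
      omega

lemma key (n : ℕ) : s n ≤ s (n + 1) ↔ n % 4 ≠ 3 := by
  rcases Nat.even_or_odd n with ⟨m, hm⟩ | ⟨m, hm⟩
  · subst hm
    rw [show m + m = 2 * m by ring, s_two_mul, s_two_mul_add_one]
    constructor
    · intro _ h; omega
    · intro _; omega
  · subst hm
    rw [show 2 * m + 1 + 1 = 2 * (m + 1) by ring, s_two_mul, s_two_mul_add_one]
    rcases Nat.even_or_odd m with ⟨j, hj⟩ | ⟨j, hj⟩
    · subst hj
      rw [show j + j + 1 = 2 * j + 1 by ring, s_two_mul_add_one,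
        show j + j = 2 * j by ring, s_two_mul]
      constructor
      · intro _ ; omega
      · intro _; omega
    · subst hj
      rw [show 2 * j + 1 + 1 = 2 * (j + 1) by ring, s_two_mul, s_two_mul_add_one]
      have := s_succ_le j
      constructor
      · intro h; omega
      · intro h; omega

lemma count_eq (N : ℕ) :
    ((Finset.range N).filter
      (fun n => (Nat.digits 2 n).sum ≤ (Nat.digits 2 (n + 1)).sum)).card = N - N / 4 := by
  induction N with
  | zero => simp
  | succ N ih =>
    rw [Finset.range_add_one, Finset.filter_insert]
    by_cases h : (Nat.digits 2 N).sum ≤ (Nat.digits 2 (N + 1)).sum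
    · rw [if_pos h, Finset.card_insert_of_notMem (by simp), ih]
      have : N % 4 ≠ 3 := (key N).mp h
      omega
    · rw [if_neg h, ih]
      have : N % 4 = 3 := by
        by_contra hc
        exact h ((key N).mpr hc)
      omega

theorem cusick_stmt1 :
    Tendsto
      (fun N : ℕ =>
        (((Finset.range N).filter
            (fun n => (Nat.digits 2 n).sum ≤ (Nat.digits 2 (n + 1)).sum)).card : ℝ) / N)
      atTop (nhds (3 / 4)) := by
  have hub : Tendsto (fun N : ℕ => 3 / 4 + 1 / (N : ℝ)) atTop (nhds (3 / 4)) := by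
    have h : Tendsto (fun n : ℕ => 1 / (n : ℝ)) atTop (nhds 0) := tendsto_one_div_atTop_nhds_zero_nat
    simpa using tendsto_const_nhds.add h
  refine tendsto_of_tendsto_of_tendsto_of_le_of_le' (tendsto_const_nhds) hub ?_ ?_
  · filter_upwards [eventually_ge_atTop 1] with N hN
    rw [count_eq]
    have hpos : (0 : ℝ) < N := by exact_mod_cast hN
    have hle : N / 4 ≤ N := Nat.div_le_self N 4
    rw [Nat.cast_sub hle, le_div_iff₀ hpos]
    have h4 : N / 4 * 4 ≤ N := Nat.div_mul_le_self N 4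
    have h4' : ((N / 4 : ℕ) : ℝ) * 4 ≤ (N : ℝ) := by exact_mod_cast h4
    linarith
  · filter_upwards [eventually_ge_atTop 1] with N hN
    rw [count_eq]
    have hpos : (0 : ℝ) < N := by exact_mod_cast hN
    have hle : N / 4 ≤ N := Nat.div_le_self N 4
    rw [Nat.cast_sub hle, div_le_iff₀ hpos]
    have h4 : N < 4 * (N / 4) + 4 := by omega
    have h4' : (N : ℝ) < 4 * ((N / 4 : ℕ) : ℝ) + 4 := by exact_mod_cast h4
    have hinv : (1 / (N : ℝ)) * N = 1 := by field_simp
    nlinarith
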